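/- Let ν be p-symmetric with minimal factorization ν·w = (p^k - 1)·ℓ (i.e., w is minimal among all carry-free witnesses) and let e be the number of base-p digits of w minus 1 (the shift factor). Then k ≥ e + 1 and ℓ·p^{k-e-1} < ν. -/
import Mathlib


/-- Sum of the base-`p` digits of `n`. -/
def digitSum (p n : ℕ) : ℕ := (Nat.digits p n).sum

/-- An integer `ν > 1` coprime to `p` is `p`-symmetric if there exist positive
integers `w`, `k`, `ℓ` with `ℓ < p^k` such that `ν * w = (p^k - 1) * ℓ` and the
base-`p` product `ν * w` is carry-free, i.e. `s_p(ν*w) = s_p(ν) * s_p(w)`. -/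
def IsPSymmetric (p ν : ℕ) : Prop :=
  1 < ν ∧ Nat.Coprime ν p ∧
    ∃ w k ℓ : ℕ, 0 < w ∧ 0 < k ∧ 0 < ℓ ∧ ℓ < p ^ k ∧
      ν * w = (p ^ k - 1) * ℓ ∧
      digitSum p (ν * w) = digitSum p ν * digitSum p w

lemma ds_zero (p : ℕ) : digitSum p 0 = 0 := by simp [digitSum]

lemma ds_split {p : ℕ} (hp : 1 < p) (d z : ℕ) (hd : d < p) :
    digitSum p (d + p * z) = d + digitSum p z := by
  rcases Nat.eq_zero_or_pos (d + p * z) with h | h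
  · have hd0 : d = 0 := by omega
    have hz0 : z = 0 := by
      rcases Nat.eq_zero_or_pos z with h'|h'
      · exact h'
      · exfalso; have : 0 < p * z := Nat.mul_pos (by omega) h'; omega
    subst hd0; subst hz0; simp [digitSum]
  · unfold digitSum
    rw [Nat.digits_def' hp h]
    have h1 : (d + p * z) % p = d := by
      rw [Nat.add_mul_mod_self_left, Nat.mod_eq_of_lt hd]
    have h2 : (d + p * z) / p = z := by
      rw [Nat.add_mul_div_left _ _ (by omega : 0 < p), Nat.div_eq_of_lt hd]; omega
    rw [h1, h2]; simp

lemma ds_eq {p : ℕ} (hp : 1 < p) (x : ℕ) :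
    digitSum p x = x % p + digitSum p (x / p) := by
  conv_lhs => rw [← Nat.mod_add_div x p]
  exact ds_split hp _ _ (Nat.mod_lt _ (by omega))

lemma ds_eq_zero {p : ℕ} (hp : 1 < p) : ∀ x, digitSum p x = 0 → x = 0 := by
  intro x
  induction x using Nat.strong_induction_on with
  | _ x ih =>
    intro hx
    rcases Nat.eq_zero_or_pos x with rfl | hpos
    · rfl
    · exfalso
      have h := ds_eq hp x
      have h1 : x % p = 0 := by omega
      have h2 : digitSum p (x / p) = 0 := by omega
      have h3 : x / p = 0 := ih _ (Nat.div_lt_self hpos hp) h2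
      have hmod := Nat.mod_add_div x p
      rw [h3, Nat.mul_zero] at hmod
      omega

lemma ds_one {p : ℕ} (hp : 1 < p) : digitSum p 1 = 1 := by
  have := ds_split hp 1 0 hp
  simpa [ds_zero] using this

lemma ds_shift {p : ℕ} (hp : 1 < p) (x : ℕ) : digitSum p (p * x) = digitSum p x := by
  have := ds_split hp 0 x (by omega)
  simpa using this

lemma ds_add_le {p : ℕ} (hp : 1 < p) (m n : ℕ) :
    digitSum p (m + n) ≤ digitSum p m + digitSum p n := by
  suffices H : ∀ N m n : ℕ, m + n ≤ N → digitSum p (m + n) ≤ digitSum p m + digitSum p n from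
    H (m + n) m n le_rfl
  intro N
  induction N with
  | zero =>
    intro m n h
    have hm : m = 0 := by omega
    have hn : n = 0 := by omega
    subst hm; subst hn; simp
  | succ N ih =>
    intro m n hmn
    rcases Nat.eq_zero_or_pos m with rfl | hm; · simp
    rcases Nat.eq_zero_or_pos n with rfl | hn; · simp
    have hdm := ds_eq hp m
    have hdn := ds_eq hp n
    have hmd : m / p < m := Nat.div_lt_self hm hp
    have hnd : n / p < n := Nat.div_lt_self hn hp
    have hmm := Nat.mod_add_div m p
    have hnn := Nat.mod_add_div n p
    have hmo : m % p < p := Nat.mod_lt _ (by omega)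
    have hno : n % p < p := Nat.mod_lt _ (by omega)
    by_cases hc : m % p + n % p < p
    · have hr : p * (m / p + n / p) = p * (m / p) + p * (n / p) := by ring
      have h1 : m + n = (m % p + n % p) + p * (m / p + n / p) := by omega
      rw [h1, ds_split hp _ _ hc]
      have := ih (m / p) (n / p) (by omega)
      omega
    · have hr : p * (m / p + n / p + 1) = p * (m / p) + p * (n / p) + p := by ring
      have h1 : m + n = (m % p + n % p - p) + p * (m / p + n / p + 1) := by omega
      rw [h1, ds_split hp _ _ (by omega)]
      have i1 := ih (m / p + n / p) 1 (by omega)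
      have i2 := ih (m / p) (n / p) (by omega)
      have hone := ds_one hp
      omega

lemma ds_smul_le {p : ℕ} (hp : 1 < p) (d b : ℕ) :
    digitSum p (d * b) ≤ d * digitSum p b := by
  induction d with
  | zero => simp [ds_zero]
  | succ d ih =>
    have : (d + 1) * b = d * b + b := by ring
    rw [this]
    calc digitSum p (d * b + b) ≤ digitSum p (d * b) + digitSum p b := ds_add_le hp _ _
      _ ≤ d * digitSum p b + digitSum p b := by omega
      _ = (d + 1) * digitSum p b := by ring

lemma ds_mul_le {p : ℕ} (hp : 1 < p) : ∀ a b : ℕ,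
    digitSum p (a * b) ≤ digitSum p a * digitSum p b := by
  intro a
  induction a using Nat.strong_induction_on with
  | _ a ih =>
    intro b
    rcases Nat.eq_zero_or_pos a with rfl | ha; · simp [ds_zero]
    have h1 : a * b = (a % p) * b + p * ((a / p) * b) := by
      conv_lhs => rw [← Nat.mod_add_div a p]
      ring
    calc digitSum p (a * b)
        ≤ digitSum p ((a % p) * b) + digitSum p (p * ((a / p) * b)) := by
          rw [h1]; exact ds_add_le hp _ _
      _ = digitSum p ((a % p) * b) + digitSum p ((a / p) * b) := by rw [ds_shift hp]
      _ ≤ (a % p) * digitSum p b + digitSum p (a / p) * digitSum p b := by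
          have := ds_smul_le hp (a % p) b
          have := ih (a / p) (Nat.div_lt_self ha hp) b
          omega
      _ = digitSum p a * digitSum p b := by rw [ds_eq hp a, add_mul]

lemma ds_highlow {p : ℕ} (hp : 1 < p) : ∀ (k a b : ℕ), b < p ^ k →
    digitSum p (a * p ^ k + b) = digitSum p a + digitSum p b := by
  intro k
  induction k with
  | zero =>
    intro a b hb
    rw [pow_zero] at hb
    have hb0 : b = 0 := by omega
    subst hb0; simp [ds_zero]
  | succ k ih =>
    intro a b hb
    have hb1 : b / p < p ^ k := by
      apply Nat.div_lt_of_lt_mul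
      rw [← pow_succ']
      exact hb
    have hbm := Nat.mod_add_div b p
    have hr : p * (a * p ^ k + b / p) = a * p ^ (k + 1) + p * (b / p) := by ring
    have h1 : a * p ^ (k + 1) + b = (b % p) + p * (a * p ^ k + b / p) := by omega
    rw [h1, ds_split hp _ _ (Nat.mod_lt _ (by omega)), ih a (b / p) hb1, ds_eq hp b]
    omega

lemma ds_compl {p : ℕ} (hp : 1 < p) : ∀ (k x : ℕ), x < p ^ k →
    digitSum p x + digitSum p (p ^ k - 1 - x) = k * (p - 1) := by
  intro k
  induction k with
  | zero =>
    intro x hx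
    rw [pow_zero] at hx
    have hx0 : x = 0 := by omega
    subst hx0; simp [ds_zero]
  | succ k ih =>
    intro x hx
    have hpk : 1 ≤ p ^ k := Nat.one_le_pow _ _ (by omega)
    have hxd : x / p < p ^ k := by
      apply Nat.div_lt_of_lt_mul
      rw [← pow_succ']
      exact hx
    have hxm := Nat.mod_add_div x p
    have hxo : x % p < p := Nat.mod_lt _ (by omega)
    have hps : p ^ (k + 1) = p * p ^ k := by ring
    have hr : p * (p ^ k - 1 - x / p) = p * p ^ k - p - p * (x / p) := by
      rw [Nat.mul_sub, Nat.mul_sub, Nat.mul_one]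
    have hmul : p * (x / p + 1) ≤ p * p ^ k := Nat.mul_le_mul_left p (by omega)
    have hmul' : p * (x / p + 1) = p * (x / p) + p := by ring
    have h1 : p ^ (k + 1) - 1 - x = (p - 1 - x % p) + p * (p ^ k - 1 - x / p) := by omega
    rw [h1, ds_split hp _ _ (by omega), ds_eq hp x]
    have := ih (x / p) hxd
    have hxp : x % p ≤ p - 1 := by omega
    have : (k + 1) * (p - 1) = (p - 1) + k * (p - 1) := by ring
    omega

lemma ds_repunit_mul {p : ℕ} (hp : 1 < p) (k m : ℕ) (hm : 0 < m) (hmk : m < p ^ k) :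
    digitSum p ((p ^ k - 1) * m) = k * (p - 1) := by
  have hpk : 1 ≤ p ^ k := Nat.one_le_pow _ _ (by omega)
  have h1 : (p ^ k - 1) * m = (m - 1) * p ^ k + (p ^ k - m) := by
    have hmle : m ≤ p ^ k * m := Nat.le_mul_of_pos_left _ hpk
    have h2 : (p ^ k - 1) * m + m = p ^ k * m := by
      rw [Nat.sub_mul, Nat.one_mul]
      omega
    have h3 : (m - 1) * p ^ k + p ^ k = m * p ^ k := by
      rw [Nat.sub_mul, Nat.one_mul]
      have : p ^ k ≤ m * p ^ k := Nat.le_mul_of_pos_left _ hm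
      omega
    have h4 : p ^ k * m = m * p ^ k := by ring
    omega
  rw [h1, ds_highlow hp k (m - 1) (p ^ k - m) (by omega)]
  have h5 : p ^ k - m = p ^ k - 1 - (m - 1) := by omega
  rw [h5]
  exact ds_compl hp k (m - 1) (by omega)

lemma ds_eq_one_pow {p : ℕ} (hp : 1 < p) : ∀ ν : ℕ, digitSum p ν = 1 → ∃ j, ν = p ^ j := by
  intro ν
  induction ν using Nat.strong_induction_on with
  | _ ν ih =>
    intro hν
    have hν0 : 0 < ν := by
      rcases Nat.eq_zero_or_pos ν with rfl | h
      · simp [ds_zero] at hν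
      · exact h
    have h := ds_eq hp ν
    have hmod := Nat.mod_add_div ν p
    rcases Nat.eq_zero_or_pos (ν % p) with h0 | h0
    · have h1 : digitSum p (ν / p) = 1 := by omega
      obtain ⟨j, hj⟩ := ih (ν / p) (Nat.div_lt_self hν0 hp) h1
      refine ⟨j + 1, ?_⟩
      rw [pow_succ, ← hj]
      have hc : p * (ν / p) = ν / p * p := Nat.mul_comm _ _
      omega
    · have h1 : ν % p = 1 := by omega
      have h2 : digitSum p (ν / p) = 0 := by omega
      have h3 : ν / p = 0 := ds_eq_zero hp _ h2
      refine ⟨0, ?_⟩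
      rw [pow_zero]
      rw [h3, Nat.mul_zero] at hmod
      omega

theorem shift_factor_bound (p ν w k ℓ : ℕ) (hp : p.Prime)
    (h1 : 1 < ν) (hco : Nat.Coprime ν p)
    (hw : 0 < w) (hk : 0 < k) (hℓ : 0 < ℓ) (hℓlt : ℓ < p ^ k)
    (hfac : ν * w = (p ^ k - 1) * ℓ)
    (hcf : digitSum p (ν * w) = digitSum p ν * digitSum p w)
    (hmin : ∀ w' k' ℓ' : ℕ, 0 < w' → 0 < k' → 0 < ℓ' → ℓ' < p ^ k' →
      ν * w' = (p ^ k' - 1) * ℓ' →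
      digitSum p (ν * w') = digitSum p ν * digitSum p w' → w ≤ w') :
    (Nat.digits p w).length - 1 + 1 ≤ k ∧
      ℓ * p ^ (k - ((Nat.digits p w).length - 1) - 1) < ν := by
  have hp2 : 1 < p := hp.one_lt
  have hpk1 : 1 < p ^ k := Nat.one_lt_pow (by omega) hp2
  -- digit sum of ν * w is k * (p - 1)
  have hs : digitSum p (ν * w) = k * (p - 1) := by
    rw [hfac]; exact ds_repunit_mul hp2 k ℓ hℓ hℓlt
  have hkp : 0 < k * (p - 1) := Nat.mul_pos hk (by omega)
  -- ν is not a power of p other than 1; in particular digitSum p ν ≠ 1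
  have hνpow : digitSum p ν ≠ 1 := by
    intro hone
    obtain ⟨j, rfl⟩ := ds_eq_one_pow hp2 ν hone
    have hj : 1 ≤ j := by
      by_contra hj
      have : j = 0 := by omega
      subst this; simp at h1
    have hdvd : p ∣ p ^ j := dvd_pow_self p (by omega)
    have h2 : p ∣ 1 := hco ▸ Nat.dvd_gcd hdvd dvd_rfl
    have := Nat.le_of_dvd one_pos h2
    omega
  -- Key claim: ℓ < ν
  have hlν : ℓ < ν := by
    by_contra hcon
    push_neg at hcon  -- ν ≤ ℓ
    rcases eq_or_lt_of_le hcon with heq | hlt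
    · -- ℓ = ν, so w = p^k - 1
      have hwval : w = p ^ k - 1 := by
        have : ν * w = ν * (p ^ k - 1) := by rw [hfac, ← heq, Nat.mul_comm]
        exact Nat.eq_of_mul_eq_mul_left (by omega) this
      have hsw : digitSum p w = k * (p - 1) := by
        have : w = (p ^ k - 1) * 1 := by rw [hwval, Nat.mul_one]
        rw [this]
        exact ds_repunit_mul hp2 k 1 one_pos hpk1
      rw [hs, hsw] at hcf
      have : digitSum p ν = 1 := by
        rcases Nat.eq_zero_or_pos (digitSum p ν) with h0 | h0
        · rw [h0] at hcf; omega
        · nlinarith [hcf, hkp]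
      exact hνpow this
    · -- ν < ℓ : construct a smaller witness
      have hwge : p ^ k ≤ w := by
        by_contra hwlt
        push_neg at hwlt
        have h2 : ν * w ≤ ν * (p ^ k - 1) := Nat.mul_le_mul_left _ (by omega)
        have h3 : (p ^ k - 1) * (ν + 1) ≤ (p ^ k - 1) * ℓ := Nat.mul_le_mul_left _ (by omega)
        have h4 : (p ^ k - 1) * (ν + 1) = ν * (p ^ k - 1) + (p ^ k - 1) := by ring
        omega
      set a := w / p ^ k with ha_def
      set b := w % p ^ k with hb_def
      have ha1 : 1 ≤ a := by
        rw [ha_def]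
        exact Nat.one_le_div_iff (by omega) |>.mpr hwge
      have hbk : b < p ^ k := Nat.mod_lt _ (by omega)
      have hwab : w = a * p ^ k + b := by
        rw [ha_def, hb_def]
        have h0 : p ^ k * (w / p ^ k) + w % p ^ k = w := Nat.div_add_mod w (p ^ k)
        have h1 : w / p ^ k * p ^ k = p ^ k * (w / p ^ k) := Nat.mul_comm _ _
        omega
      -- ν * a < ℓ
      have hνa : ν * a < ℓ := by
        by_contra hcon2
        push_neg at hcon2
        have h4 : ν * w = ν * a * p ^ k + ν * b := by rw [hwab]; ring
        have h5 : ℓ * p ^ k ≤ ν * a * p ^ k := Nat.mul_le_mul_right _ hcon2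
        have h6 : (p ^ k - 1) * ℓ + ℓ = p ^ k * ℓ := by
          rw [Nat.sub_mul, Nat.one_mul]
          have : ℓ ≤ p ^ k * ℓ := Nat.le_mul_of_pos_left _ (by omega)
          omega
        have h7 : ℓ * p ^ k = p ^ k * ℓ := Nat.mul_comm _ _
        omega
      set L := ℓ - ν * a with hL_def
      have hL1 : ℓ = L + ν * a := by omega
      have hkey : ν * (a + b) = (p ^ k - 1) * L := by
        have hf := hfac
        zify [show 1 ≤ p ^ k by omega] at hf ⊢
        have hw' : (w : ℤ) = a * (p : ℤ) ^ k + b := by exact_mod_cast hwab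
        have hl' : (ℓ : ℤ) = L + ν * a := by exact_mod_cast hL1
        rw [hw', hl'] at hf
        linear_combination hf
      have hL0 : 0 < L := by
        rcases Nat.eq_zero_or_pos L with h0 | h0
        · exfalso
          rw [h0, Nat.mul_zero] at hkey
          have : 0 < ν * (a + b) := Nat.mul_pos (by omega) (by omega)
          omega
        · exact h0
      have hLk : L < p ^ k := by omega
      -- carry-freeness of the new witness
      have hsab : digitSum p (ν * (a + b)) = k * (p - 1) := by
        rw [hkey]; exact ds_repunit_mul hp2 k L hL0 hLk
      have hsw : digitSum p w = digitSum p a + digitSum p b := by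
        rw [hwab]; exact ds_highlow hp2 k a b hbk
      have hup : digitSum p (ν * (a + b)) ≤ digitSum p ν * digitSum p (a + b) :=
        ds_mul_le hp2 ν (a + b)
      have hdown : digitSum p (a + b) ≤ digitSum p a + digitSum p b := ds_add_le hp2 a b
      have hcf' : digitSum p (ν * (a + b)) = digitSum p ν * digitSum p (a + b) := by
        have h5 : digitSum p ν * (digitSum p a + digitSum p b) = k * (p - 1) := by
          rw [← hsw, ← hcf, hs]
        have h6 : digitSum p ν * digitSum p (a + b)
            ≤ digitSum p ν * (digitSum p a + digitSum p b) :=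
          Nat.mul_le_mul_left _ hdown
        omega
      have hle := hmin (a + b) k L (Nat.add_pos_left ha1 b) hk hL0 hLk hkey hcf'
      have : a + b < w := by
        rw [hwab]
        have h15 : a * 1 < a * p ^ k := mul_lt_mul_of_pos_left hpk1 (by omega)
        omega
      omega
  -- now derive the two bounds
  have hwlt : w < p ^ k - 1 := by
    have h2 : ν * w < ν * (p ^ k - 1) := by
      rw [hfac]
      calc (p ^ k - 1) * ℓ < (p ^ k - 1) * ν := mul_lt_mul_of_pos_left hlν (by omega)
        _ = ν * (p ^ k - 1) := Nat.mul_comm _ _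
    exact Nat.lt_of_mul_lt_mul_left h2
  set e := (Nat.digits p w).length - 1 with he_def
  have hlenpos : 1 ≤ (Nat.digits p w).length := by
    have : Nat.digits p w ≠ [] := Nat.digits_ne_nil_iff_ne_zero.mpr (by omega)
    exact List.length_pos_iff.mpr this
  have hlen : (Nat.digits p w).length = e + 1 := by omega
  -- length ≤ k
  have hlenk : (Nat.digits p w).length ≤ k := by
    by_contra hcon
    push_neg at hcon
    have h2 : p ^ (Nat.digits p w).length ≤ p * w :=
      Nat.base_pow_length_digits_le p w hp2 (by omega)
    have h3 : p ^ (k + 1) ≤ p ^ (Nat.digits p w).length :=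
      Nat.pow_le_pow_right (by omega) (by omega)
    have h4 : p * w < p * p ^ k := mul_lt_mul_of_pos_left (by omega) (by omega)
    rw [← pow_succ'] at h4
    omega
  refine ⟨by omega, ?_⟩
  have hwup : w < p ^ (e + 1) := by
    rw [← hlen]
    exact Nat.lt_base_pow_length_digits hp2
  have hkstep : p ^ (k - e - 1) * w < p ^ k - 1 := by
    rcases eq_or_lt_of_le (show e + 1 ≤ k by omega) with heq | hlt2
    · have : k - e - 1 = 0 := by omega
      rw [this, pow_zero, Nat.one_mul]
      exact hwlt
    ·
      have h7 : p ^ (k - e - 1) * p ^ (e + 1) = p ^ k := by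
        rw [← pow_add]
        congr 1
        omega
      have h8 : p ^ (k - e - 1) * w ≤ p ^ (k - e - 1) * (p ^ (e + 1) - 1) :=
        Nat.mul_le_mul_left _ (by omega)
      have h9 : p ^ (k - e - 1) * (p ^ (e + 1) - 1)
          = p ^ (k - e - 1) * p ^ (e + 1) - p ^ (k - e - 1) := by
        rw [Nat.mul_sub, Nat.mul_one]
      have h10 : p ≤ p ^ (k - e - 1) := by
        calc p = p ^ 1 := (pow_one p).symm
          _ ≤ p ^ (k - e - 1) := Nat.pow_le_pow_right (by omega) (by omega)
      have h11 : 1 ≤ p ^ (e + 1) := Nat.one_le_pow _ _ (by omega)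
      omega
  -- conclude
  by_contra hcon
  push_neg at hcon  -- ν ≤ ℓ * p ^ (k - e - 1)
  have h12 : ν * w ≤ ℓ * p ^ (k - e - 1) * w := Nat.mul_le_mul_right _ hcon
  have h13 : ℓ * p ^ (k - e - 1) * w = ℓ * (p ^ (k - e - 1) * w) := by ring
  have h14 : ℓ * (p ^ (k - e - 1) * w) < ℓ * (p ^ k - 1) :=
    mul_lt_mul_of_pos_left hkstep (by omega)
  rw [hfac] at h12
  have hcomm : ℓ * (p ^ k - 1) = (p ^ k - 1) * ℓ := Nat.mul_comm _ _
  omega
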